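/- arXiv:2106.01488 — 4 statements merged into one kernel-verified Lean document; each statement's English description precedes it below -/
import Mathlib

section
/- For T-step stochastic gradient ascent y_{t+1} = y_t + η∇_y f_{σ(t)}(x, y_t) with initialization y_0 independent of x, if every f_j is L-gradient Lipschitz, then the map x ↦ y_T(x) is (1+ηL)^T-Lipschitz. -/
/-- `T`-step stochastic gradient ascent with `L`-gradient Lipschitz
component functions and initialization independent of `x` is
`(1+ηL)^T`-Lipschitz as a map `x ↦ y_T(x)`. -/
theorem sga_lipschitz {d1 d2 n : ℕ} (L η : ℝ) (hL : 0 ≤ L) (hη : 0 ≤ η) (T : ℕ)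
    (f : Fin n → EuclideanSpace ℝ (Fin d1) → EuclideanSpace ℝ (Fin d2) → ℝ)
    (σ : ℕ → Fin n) (y0 : EuclideanSpace ℝ (Fin d2))
    (y : EuclideanSpace ℝ (Fin d1) → ℕ → EuclideanSpace ℝ (Fin d2))
    (hdiff : ∀ j x, Differentiable ℝ (f j x))
    (hgrad : ∀ j x1 y1 x2 y2,
      ‖gradient (f j x1) y1 - gradient (f j x2) y2‖ ≤ L * (‖x1 - x2‖ + ‖y1 - y2‖))
    (hy0 : ∀ x, y x 0 = y0)
    (hrec : ∀ x t, y x (t + 1) = y x t + η • gradient (f (σ t) x) (y x t)) :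
    ∀ x1 x2, ‖y x1 T - y x2 T‖ ≤ (1 + η * L) ^ T * ‖x1 - x2‖ := by
  intro x1 x2
  have key : ∀ t, ‖y x1 t - y x2 t‖ ≤ ((1 + η * L) ^ t - 1) * ‖x1 - x2‖ := by
    intro t
    induction t with
    | zero => simp [hy0]
    | succ t ih =>
      have h1 : y x1 (t+1) - y x2 (t+1) = (y x1 t - y x2 t) +
          η • (gradient (f (σ t) x1) (y x1 t) - gradient (f (σ t) x2) (y x2 t)) := by
        rw [hrec, hrec, smul_sub]; abel
      have h2 : ‖y x1 (t+1) - y x2 (t+1)‖ ≤ ‖y x1 t - y x2 t‖ +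
          η * ‖gradient (f (σ t) x1) (y x1 t) - gradient (f (σ t) x2) (y x2 t)‖ := by
        rw [h1]
        calc _ ≤ ‖y x1 t - y x2 t‖ + ‖η • (gradient (f (σ t) x1) (y x1 t) -
              gradient (f (σ t) x2) (y x2 t))‖ := norm_add_le _ _
        _ = _ := by rw [norm_smul, Real.norm_of_nonneg hη]
      have h3 := hgrad (σ t) x1 (y x1 t) x2 (y x2 t)
      have hpow : (1:ℝ) ≤ (1 + η * L) ^ t :=
        one_le_pow₀ (by nlinarith)
      have hd : 0 ≤ ‖y x1 t - y x2 t‖ := norm_nonneg _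
      have hx : 0 ≤ ‖x1 - x2‖ := norm_nonneg _
      calc ‖y x1 (t+1) - y x2 (t+1)‖
          ≤ ‖y x1 t - y x2 t‖ + η * (L * (‖x1 - x2‖ + ‖y x1 t - y x2 t‖)) := by
            nlinarith
        _ ≤ ((1 + η * L) ^ (t+1) - 1) * ‖x1 - x2‖ := by
            rw [pow_succ]
            nlinarith [mul_nonneg hη hL, mul_le_mul_of_nonneg_left ih
              (by nlinarith : (0:ℝ) ≤ 1 + η * L)]
  calc ‖y x1 T - y x2 T‖ ≤ ((1 + η * L) ^ T - 1) * ‖x1 - x2‖ := key T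
    _ ≤ (1 + η * L) ^ T * ‖x1 - x2‖ := by
        apply mul_le_mul_of_nonneg_right (by linarith) (norm_nonneg _)
end

section
/- For T-step stochastic gradient ascent y_{t+1} = y_t + η∇_y f_{σ(t)}(x, y_t) with Dy_0 = 0, if each f_j is L-gradient Lipschitz and ρ-Hessian Lipschitz, then the Jacobian x ↦ Dy_T(x) is Lipschitz with constant 4(ρ/L)(1+ηL)^{2T}. -/
noncomputable def sgaA {E1 E2 : Type*} [NormedAddCommGroup E1] [NormedSpace ℝ E1]
    [NormedAddCommGroup E2] [NormedSpace ℝ E2]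
    (η : ℝ) (g : ℕ → E1 × E2 → E2) (y : E1 → ℕ → E2) (x : E1) : ℕ → (E1 →L[ℝ] E2)
  | 0 => 0
  | (t+1) => sgaA η g y x t +
      η • (fderiv ℝ (g t) (x, y x t)).comp
        ((ContinuousLinearMap.id ℝ E1).prod (sgaA η g y x t))

section sgaAux
variable {E1 E2 : Type*} [NormedAddCommGroup E1] [NormedSpace ℝ E1]
  [NormedAddCommGroup E2] [NormedSpace ℝ E2]

lemma sga_prod_id_norm_le (u : E1 →L[ℝ] E2) :
    ‖(ContinuousLinearMap.id ℝ E1).prod u‖ ≤ max 1 ‖u‖ := by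
  refine ContinuousLinearMap.opNorm_le_bound _ (le_max_of_le_left zero_le_one) fun v => ?_
  rw [ContinuousLinearMap.prod_apply, Prod.norm_def]
  simp only [ContinuousLinearMap.coe_id', id_eq]
  rcases le_total ‖v‖ ‖u v‖ with h | h
  · calc max ‖v‖ ‖u v‖ = ‖u v‖ := max_eq_right h
      _ ≤ ‖u‖ * ‖v‖ := u.le_opNorm v
      _ ≤ max 1 ‖u‖ * ‖v‖ := by gcongr; exact le_max_right _ _
  · calc max ‖v‖ ‖u v‖ = ‖v‖ := max_eq_left h
      _ = 1 * ‖v‖ := (one_mul _).symm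
      _ ≤ max 1 ‖u‖ * ‖v‖ := by gcongr; exact le_max_left _ _

lemma sga_prod_id_sub_norm_le (u1 u2 : E1 →L[ℝ] E2) :
    ‖(ContinuousLinearMap.id ℝ E1).prod u1 - (ContinuousLinearMap.id ℝ E1).prod u2‖
      ≤ ‖u1 - u2‖ := by
  refine ContinuousLinearMap.opNorm_le_bound _ (norm_nonneg _) fun v => ?_
  have h : ((ContinuousLinearMap.id ℝ E1).prod u1 - (ContinuousLinearMap.id ℝ E1).prod u2) v
      = (0, (u1 - u2) v) := by
    simp [Prod.ext_iff]
  rw [h, Prod.norm_def]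
  simp only [norm_zero]
  rw [max_eq_right (norm_nonneg _)]
  exact (u1 - u2).le_opNorm v

theorem sga_aux (L ρ η : ℝ) (hL : 0 < L) (hρ : 0 ≤ ρ) (hη : 0 ≤ η)
    (g : ℕ → E1 × E2 → E2)
    (hGdiff : ∀ t, Differentiable ℝ (g t))
    (hGbound : ∀ t w, ‖fderiv ℝ (g t) w‖ ≤ L)
    (hHess : ∀ t (w1 w2 : E1 × E2), ‖fderiv ℝ (g t) w1 - fderiv ℝ (g t) w2‖
      ≤ ρ * (‖w1.1 - w2.1‖ + ‖w1.2 - w2.2‖))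
    (y : E1 → ℕ → E2) (y0 : E2) (hy0 : ∀ x, y x 0 = y0)
    (hrec : ∀ x t, y x (t + 1) = y x t + η • g t (x, y x t)) :
    ∀ T x1 x2, ‖fderiv ℝ (fun x => y x T) x1 - fderiv ℝ (fun x => y x T) x2‖
      ≤ (ρ / L) * (1 + η * L) ^ (2 * T) * ‖x1 - x2‖ := by
  have hηL : (0:ℝ) ≤ η * L := mul_nonneg hη hL.le
  have hone : (1:ℝ) ≤ 1 + η * L := by linarith
  have hanonneg : (0:ℝ) ≤ 1 + η * L := by linarith
  have hρL : (0:ℝ) ≤ ρ / L := div_nonneg hρ hL.le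
  -- g is L-Lipschitz
  have glip : ∀ t (w1 w2 : E1 × E2),
      ‖g t w1 - g t w2‖ ≤ L * (‖w1.1 - w2.1‖ + ‖w1.2 - w2.2‖) := by
    intro t w1 w2
    have h1 : ‖g t w1 - g t w2‖ ≤ L * ‖w1 - w2‖ :=
      (convex_univ (𝕜 := ℝ)).norm_image_sub_le_of_norm_fderiv_le
        (fun x _ => (hGdiff t x)) (fun x _ => hGbound t x) trivial trivial
    refine h1.trans ?_
    gcongr
    rw [Prod.norm_def]
    exact max_le (by simp [le_add_of_nonneg_right (norm_nonneg _)])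
      (by simp [le_add_of_nonneg_left (norm_nonneg _)])
  -- derivative identification
  have hA : ∀ t x, HasFDerivAt (fun x => y x t) (sgaA η g y x t) x := by
    intro t
    induction t with
    | zero =>
      intro x
      have h : (fun x => y x 0) = fun _ => y0 := funext fun x => hy0 x
      rw [h]
      exact hasFDerivAt_const _ _
    | succ t ih =>
      intro x
      have h : (fun x => y x (t+1)) = fun x => y x t + η • g t (x, y x t) :=
        funext fun x => hrec x t
      rw [h]
      exact (ih x).add ((((hGdiff t _).hasFDerivAt.comp x
        ((hasFDerivAt_id x).prodMk (ih x)))).const_smul η)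
  -- norm bound on A
  have hAnorm : ∀ t x, ‖sgaA η g y x t‖ ≤ (1 + η * L) ^ t - 1 := by
    intro t
    induction t with
    | zero => intro x; simp [sgaA]
    | succ t ih =>
      intro x
      have hp : (0:ℝ) ≤ (1 + η * L) ^ t := pow_nonneg hanonneg t
      have h1p : (1:ℝ) ≤ (1 + η * L) ^ t := one_le_pow₀ hone
      have hmax : max 1 ‖sgaA η g y x t‖ ≤ (1 + η * L) ^ t :=
        max_le h1p ((ih x).trans (by linarith))
      have hterm : ‖η • (fderiv ℝ (g t) (x, y x t)).comp
          ((ContinuousLinearMap.id ℝ E1).prod (sgaA η g y x t))‖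
          ≤ η * (L * (1 + η * L) ^ t) := by
        have h1 := norm_smul η ((fderiv ℝ (g t) (x, y x t)).comp
          ((ContinuousLinearMap.id ℝ E1).prod (sgaA η g y x t)))
        rw [h1, Real.norm_eq_abs, abs_of_nonneg hη]
        gcongr
        refine (ContinuousLinearMap.opNorm_comp_le _ _).trans ?_
        exact mul_le_mul (hGbound t _) ((sga_prod_id_norm_le _).trans hmax)
          (norm_nonneg _) hL.le
      calc ‖sgaA η g y x (t+1)‖
          ≤ ‖sgaA η g y x t‖ + ‖η • (fderiv ℝ (g t) (x, y x t)).comp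
              ((ContinuousLinearMap.id ℝ E1).prod (sgaA η g y x t))‖ := norm_add_le _ _
        _ ≤ ((1 + η * L) ^ t - 1) + η * (L * (1 + η * L) ^ t) := add_le_add (ih x) hterm
        _ ≤ (1 + η * L) ^ (t+1) - 1 := by rw [pow_succ]; nlinarith
  -- y Lipschitz
  have hylip : ∀ t x1 x2, ‖y x1 t - y x2 t‖ ≤ ((1 + η * L) ^ t - 1) * ‖x1 - x2‖ := by
    intro t
    induction t with
    | zero => intro x1 x2; simp [hy0]
    | succ t ih =>
      intro x1 x2
      have hp : (0:ℝ) ≤ (1 + η * L) ^ t := pow_nonneg hanonneg t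
      have key := glip t (x1, y x1 t) (x2, y x2 t)
      simp only at key
      have hx : (0:ℝ) ≤ ‖x1 - x2‖ := norm_nonneg _
      have heq : y x1 (t+1) - y x2 (t+1)
          = (y x1 t - y x2 t) + η • (g t (x1, y x1 t) - g t (x2, y x2 t)) := by
        rw [hrec, hrec, smul_sub]; abel
      have hsm := norm_smul η (g t (x1, y x1 t) - g t (x2, y x2 t))
      calc ‖y x1 (t+1) - y x2 (t+1)‖
          ≤ ‖y x1 t - y x2 t‖ + ‖η • (g t (x1, y x1 t) - g t (x2, y x2 t))‖ := by
            rw [heq]; exact norm_add_le _ _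
        _ = ‖y x1 t - y x2 t‖ + η * ‖g t (x1, y x1 t) - g t (x2, y x2 t)‖ := by
            rw [hsm, Real.norm_eq_abs, abs_of_nonneg hη]
        _ ≤ ((1 + η * L) ^ t - 1) * ‖x1 - x2‖
            + η * (L * (‖x1 - x2‖ + ((1 + η * L) ^ t - 1) * ‖x1 - x2‖)) := by
            refine add_le_add (ih x1 x2) ?_
            refine mul_le_mul_of_nonneg_left (key.trans ?_) hη
            exact mul_le_mul_of_nonneg_left (add_le_add_right (ih x1 x2) _) hL.le
        _ ≤ ((1 + η * L) ^ (t+1) - 1) * ‖x1 - x2‖ := by rw [pow_succ]; nlinarith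
  -- main estimate
  have main : ∀ t x1 x2, ‖sgaA η g y x1 t - sgaA η g y x2 t‖
      ≤ (ρ / L) * ((1 + η * L) ^ (2*t) - (1 + η * L) ^ t) * ‖x1 - x2‖ := by
    intro t
    induction t with
    | zero => intro x1 x2; simp [sgaA]
    | succ t ih =>
      intro x1 x2
      set u1 := sgaA η g y x1 t with hu1
      set u2 := sgaA η g y x2 t with hu2
      set G1 := fderiv ℝ (g t) (x1, y x1 t) with hG1
      set G2 := fderiv ℝ (g t) (x2, y x2 t) with hG2
      set P1 := (ContinuousLinearMap.id ℝ E1).prod u1 with hP1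
      set P2 := (ContinuousLinearMap.id ℝ E1).prod u2 with hP2
      have hx : (0:ℝ) ≤ ‖x1 - x2‖ := norm_nonneg _
      have hpt : (0:ℝ) ≤ (1+η*L)^t := pow_nonneg hanonneg t
      have h1t : (1:ℝ) ≤ (1+η*L)^t := one_le_pow₀ hone
      have hG1G2 : ‖G1 - G2‖ ≤ ρ * (1 + η * L) ^ t * ‖x1 - x2‖ := by
        refine (hHess t _ _).trans ?_
        have hy := hylip t x1 x2
        simp only
        calc ρ * (‖x1 - x2‖ + ‖y x1 t - y x2 t‖)
            ≤ ρ * (‖x1 - x2‖ + ((1 + η * L) ^ t - 1) * ‖x1 - x2‖) := by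
              exact mul_le_mul_of_nonneg_left (add_le_add_right hy _) hρ
          _ = ρ * (1 + η * L) ^ t * ‖x1 - x2‖ := by ring
      have hsplit : G1.comp P1 - G2.comp P2 = (G1 - G2).comp P1 + G2.comp (P1 - P2) := by
        rw [ContinuousLinearMap.sub_comp, ContinuousLinearMap.comp_sub]; abel
      have hterm1 : ‖(G1 - G2).comp P1‖ ≤ ρ * (1+η*L)^(2*t) * ‖x1 - x2‖ := by
        refine (ContinuousLinearMap.opNorm_comp_le _ _).trans ?_
        have hP1n : ‖P1‖ ≤ (1+η*L)^t :=
          (sga_prod_id_norm_le u1).trans (max_le h1t ((hAnorm t x1).trans (by linarith)))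
        calc ‖G1 - G2‖ * ‖P1‖ ≤ (ρ * (1 + η * L) ^ t * ‖x1 - x2‖) * (1+η*L)^t := by
              exact mul_le_mul hG1G2 hP1n (norm_nonneg _)
                (by positivity)
          _ = ρ * (1+η*L)^(2*t) * ‖x1 - x2‖ := by rw [two_mul, pow_add]; ring
      have hterm2 : ‖G2.comp (P1 - P2)‖ ≤ L * ‖u1 - u2‖ := by
        refine (ContinuousLinearMap.opNorm_comp_le _ _).trans ?_
        exact mul_le_mul (hGbound t _) (sga_prod_id_sub_norm_le u1 u2)
          (norm_nonneg _) hL.le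
      have hstep : ‖G1.comp P1 - G2.comp P2‖
          ≤ ρ * (1+η*L)^(2*t) * ‖x1 - x2‖ + L * ‖u1 - u2‖ := by
        rw [hsplit]
        exact (norm_add_le _ _).trans (add_le_add hterm1 hterm2)
      have ihx := ih x1 x2
      have hdiffeq : sgaA η g y x1 (t+1) - sgaA η g y x2 (t+1)
          = (u1 - u2) + η • (G1.comp P1 - G2.comp P2) := by
        simp only [sgaA]
        rw [smul_sub]
        abel
      have hsm := norm_smul η (G1.comp P1 - G2.comp P2)
      calc ‖sgaA η g y x1 (t+1) - sgaA η g y x2 (t+1)‖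
          ≤ ‖u1 - u2‖ + η * ‖G1.comp P1 - G2.comp P2‖ := by
            rw [hdiffeq]
            refine (norm_add_le _ _).trans ?_
            rw [hsm, Real.norm_eq_abs, abs_of_nonneg hη]
        _ ≤ ‖u1 - u2‖ + η * (ρ * (1+η*L)^(2*t) * ‖x1 - x2‖ + L * ‖u1 - u2‖) :=
            add_le_add_right (mul_le_mul_of_nonneg_left hstep hη) _
        _ = (1 + η*L) * ‖u1 - u2‖ + η * ρ * (1+η*L)^(2*t) * ‖x1 - x2‖ := by ring
        _ ≤ (1 + η*L) * ((ρ / L) * ((1 + η * L) ^ (2*t) - (1 + η * L) ^ t) * ‖x1 - x2‖)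
            + η * ρ * (1+η*L)^(2*t) * ‖x1 - x2‖ := by
            exact add_le_add_left (mul_le_mul_of_nonneg_left ihx hanonneg) _
        _ ≤ (ρ / L) * ((1 + η * L) ^ (2*(t+1)) - (1 + η * L) ^ (t+1)) * ‖x1 - x2‖ := by
            have hL0 : L ≠ 0 := hL.ne'
            have hkey : (ρ / L) * ((1 + η * L) ^ (2*(t+1)) - (1 + η * L) ^ (t+1)) * ‖x1 - x2‖
                - ((1 + η*L) * ((ρ / L) * ((1 + η * L) ^ (2*t) - (1 + η * L) ^ t) * ‖x1 - x2‖)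
                  + η * ρ * (1+η*L)^(2*t) * ‖x1 - x2‖)
                = (ρ/L) * ‖x1 - x2‖ * ((1+η*L)^(2*t)) * (η*L)^2 := by
              rw [show 2*(t+1) = 2*t+1+1 by ring, pow_succ, pow_succ, pow_succ]
              field_simp
              ring
            have hfact : (0:ℝ) ≤ (ρ/L) * ‖x1 - x2‖ * ((1+η*L)^(2*t)) * (η*L)^2 := by
              have : (0:ℝ) ≤ (1+η*L)^(2*t) := pow_nonneg hanonneg _
              positivity
            linarith
  intro T x1 x2
  rw [(hA T x1).fderiv, (hA T x2).fderiv]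
  refine (main T x1 x2).trans ?_
  have hT : (0:ℝ) ≤ (1 + η * L) ^ T := pow_nonneg hanonneg T
  refine mul_le_mul_of_nonneg_right ?_ (norm_nonneg _)
  refine mul_le_mul_of_nonneg_left ?_ hρL
  linarith

end sgaAux


/-- For `T`-step SGA on `L`-gradient Lipschitz and `ρ`-Hessian
Lipschitz functions, the Jacobian map `x ↦ Dy_T(x)` is
`4 (ρ/L) (1+ηL)^{2T}`-Lipschitz. -/
theorem sga_jacobian_lipschitz {d1 d2 n : ℕ} (L ρ η : ℝ) (hL : 0 < L)
    (hρ : 0 ≤ ρ) (hη : 0 ≤ η) (T : ℕ)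
    (f : Fin n → EuclideanSpace ℝ (Fin d1) → EuclideanSpace ℝ (Fin d2) → ℝ)
    (σ : ℕ → Fin n) (y0 : EuclideanSpace ℝ (Fin d2))
    (y : EuclideanSpace ℝ (Fin d1) → ℕ → EuclideanSpace ℝ (Fin d2))
    (hdiff : ∀ j x, Differentiable ℝ (f j x))
    (hGdiff : ∀ j, Differentiable ℝ
      (fun p : EuclideanSpace ℝ (Fin d1) × EuclideanSpace ℝ (Fin d2) =>
        gradient (f j p.1) p.2))
    (hGbound : ∀ j w, ‖fderiv ℝ
      (fun p : EuclideanSpace ℝ (Fin d1) × EuclideanSpace ℝ (Fin d2) =>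
        gradient (f j p.1) p.2) w‖ ≤ L)
    (hHess : ∀ j w1 w2, ‖fderiv ℝ
        (fun p : EuclideanSpace ℝ (Fin d1) × EuclideanSpace ℝ (Fin d2) =>
          gradient (f j p.1) p.2) w1 -
      fderiv ℝ
        (fun p : EuclideanSpace ℝ (Fin d1) × EuclideanSpace ℝ (Fin d2) =>
          gradient (f j p.1) p.2) w2‖ ≤ ρ * (‖w1.1 - w2.1‖ + ‖w1.2 - w2.2‖))
    (hy0 : ∀ x, y x 0 = y0)
    (hrec : ∀ x t, y x (t + 1) = y x t + η • gradient (f (σ t) x) (y x t)) :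
    ∀ x1 x2, ‖fderiv ℝ (fun x => y x T) x1 - fderiv ℝ (fun x => y x T) x2‖
      ≤ 4 * (ρ / L) * (1 + η * L) ^ (2 * T) * ‖x1 - x2‖ := by
  have key := sga_aux L ρ η hL hρ hη
    (fun t (p : EuclideanSpace ℝ (Fin d1) × EuclideanSpace ℝ (Fin d2)) =>
      gradient (f (σ t) p.1) p.2)
    (fun t => hGdiff (σ t)) (fun t w => hGbound (σ t) w) (fun t w1 w2 => hHess (σ t) w1 w2)
    y y0 hy0 (fun x t => hrec x t) T
  intro x1 x2
  refine (key x1 x2).trans ?_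
  have hρL : (0:ℝ) ≤ ρ / L := div_nonneg hρ hL.le
  have hp : (0:ℝ) ≤ (1 + η * L) ^ (2*T) := pow_nonneg (by positivity) _
  have hx : (0:ℝ) ≤ ‖x1 - x2‖ := norm_nonneg _
  nlinarith [mul_nonneg (mul_nonneg hρL hp) hx]
end

section
/- Consider the nonnegative sequence δ_t with δ_0 = 0 satisfying δ_{t+1} ≤ ηL ∑_{τ=1}^t δ_τ + (1+ηL)(1-θ)δ_t + ηL for θ ∈ (0,1], η, L > 0. Then δ_t ≤ (1 + ηL/θ)^t for all t ≥ 0. -/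
/-- The nonnegative sequence `δ` with `δ 0 = 0` satisfying the
SNAG increment recursion is bounded by `(1 + ηL/θ)^t`. -/
theorem snag_increment_recursion (η L θ : ℝ) (hη : 0 < η) (hL : 0 < L)
    (hθ0 : 0 < θ) (hθ1 : θ ≤ 1) (δ : ℕ → ℝ) (hδ0 : δ 0 = 0)
    (hnn : ∀ t, 0 ≤ δ t)
    (hrec : ∀ t, δ (t + 1) ≤ η * L * (∑ τ ∈ Finset.Icc 1 t, δ τ) +
      (1 + η * L) * (1 - θ) * δ t + η * L) :
    ∀ t, δ t ≤ (1 + η * L / θ) ^ t := by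
  set r : ℝ := 1 + η * L / θ with hr
  have hq : 0 < η * L / θ := by positivity
  have hr1 : 1 < r := by simp only [hr]; linarith
  have hr0 : 0 < r := by linarith
  intro t
  induction t using Nat.strong_induction_on with
  | _ t ih =>
    match t with
    | 0 => simp [hδ0]
    | Nat.succ n =>
      show δ (n + 1) ≤ r ^ (n + 1)
      have hsum : ∑ τ ∈ Finset.Icc 1 n, δ τ ≤ ∑ τ ∈ Finset.Icc 1 n, r ^ τ := by
        apply Finset.sum_le_sum
        intro i hi
        exact ih i (Nat.lt_succ_of_le (Finset.mem_Icc.mp hi).2)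
      have hgeo : ∑ τ ∈ Finset.range (n + 1), r ^ τ = (r ^ (n + 1) - 1) / (r - 1) :=
        geom_sum_eq (ne_of_gt hr1) _
      have hset : Finset.range (n + 1) = insert 0 (Finset.Icc 1 n) := by
        ext x; simp [Nat.lt_succ_iff]; omega
      have h0 : (0 : ℕ) ∉ Finset.Icc 1 n := by simp
      have hicc : ∑ τ ∈ Finset.Icc 1 n, r ^ τ = (r ^ (n + 1) - 1) / (r - 1) - 1 := by
        rw [← hgeo, hset, Finset.sum_insert h0]; ring
      -- key closed form: η*L * ((r^(n+1)-1)/(r-1) - 1) = θ*(r^(n+1)-1) - η*L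
      have hrm : r - 1 = η * L / θ := by simp [hr]
      have hclosed : η * L * ((r ^ (n + 1) - 1) / (r - 1) - 1)
          = θ * (r ^ (n + 1) - 1) - η * L := by
        rw [hrm]
        field_simp
      have hpow : 0 ≤ r ^ n := le_of_lt (pow_pos hr0 n)
      have hdn : δ n ≤ r ^ n := ih n (Nat.lt_succ_self n)
      have h1θ : 0 ≤ 1 - θ := by linarith
      have hrge : 1 + η * L ≤ r := by
        have h' : η * L ≤ η * L / θ := by
          rw [le_div_iff₀ hθ0]; nlinarith [mul_pos hη hL]
        simp only [hr]; linarith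
      have hstep : δ (n + 1) ≤ η * L * ((r ^ (n + 1) - 1) / (r - 1) - 1)
          + (1 + η * L) * (1 - θ) * (r ^ n) + η * L := by
        have := hrec n
        have hmul : η * L * (∑ τ ∈ Finset.Icc 1 n, δ τ)
            ≤ η * L * ((r ^ (n + 1) - 1) / (r - 1) - 1) := by
          rw [← hicc]
          exact mul_le_mul_of_nonneg_left hsum (by positivity)
        have hmul2 : (1 + η * L) * (1 - θ) * δ n ≤ (1 + η * L) * (1 - θ) * r ^ n := by
          apply mul_le_mul_of_nonneg_left hdn
          positivity
        linarith
      rw [hclosed] at hstep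
      have hfin : θ * (r ^ (n + 1) - 1) - η * L + (1 + η * L) * (1 - θ) * r ^ n + η * L
          ≤ r ^ (n + 1) := by
        rw [pow_succ]
        nlinarith [mul_le_mul_of_nonneg_left hrge (mul_nonneg h1θ hpow)]
      linarith
end

section
/- For T-step stochastic Nesterov accelerated gradient ascent with momentum parameter θ ∈ (0,1] on L-gradient Lipschitz functions, the map x ↦ y_T(x) is T(1+ηL/θ)^T-Lipschitz. -/
/-- `T`-step stochastic Nesterov accelerated gradient ascent with
momentum parameter `θ ∈ (0,1]` on `L`-gradient Lipschitz functions is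
`T (1 + ηL/θ)^T`-Lipschitz as a map `x ↦ y_T(x)`.
(The convention `y_{-1} = y_0` is encoded by truncated subtraction `t - 1` on ℕ.) -/
theorem snag_lipschitz {d1 d2 n : ℕ} (L η θ : ℝ) (hL : 0 ≤ L) (hη : 0 ≤ η)
    (hθ0 : 0 < θ) (hθ1 : θ ≤ 1) (T : ℕ)
    (f : Fin n → EuclideanSpace ℝ (Fin d1) → EuclideanSpace ℝ (Fin d2) → ℝ)
    (σ : ℕ → Fin n) (y0 : EuclideanSpace ℝ (Fin d2))
    (y : EuclideanSpace ℝ (Fin d1) → ℕ → EuclideanSpace ℝ (Fin d2))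
    (hdiff : ∀ j x, Differentiable ℝ (f j x))
    (hgrad : ∀ j x1 y1 x2 y2,
      ‖gradient (f j x1) y1 - gradient (f j x2) y2‖ ≤ L * (‖x1 - x2‖ + ‖y1 - y2‖))
    (hy0 : ∀ x, y x 0 = y0)
    (hrec : ∀ x t, y x (t + 1) =
      (y x t + (1 - θ) • (y x t - y x (t - 1))) +
        η • gradient (f (σ t) x) (y x t + (1 - θ) • (y x t - y x (t - 1)))) :
    ∀ x1 x2, ‖y x1 T - y x2 T‖ ≤ T * (1 + η * L / θ) ^ T * ‖x1 - x2‖ := by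
  intro x1 x2
  set Δ : ℝ := ‖x1 - x2‖ with hΔdef
  have hΔ0 : 0 ≤ Δ := norm_nonneg _
  set ρ : ℝ := 1 + η * L / θ with hρdef
  have hρ1 : 1 ≤ ρ := by
    have : 0 ≤ η * L / θ := by positivity
    simp only [hρdef]; linarith
  have hρ0 : 0 ≤ ρ := by linarith
  have hθ' : 0 ≤ 1 - θ := by linarith
  have hηL : 0 ≤ η * L := mul_nonneg hη hL
  have hθρ : θ * ρ = θ + η * L := by
    rw [hρdef, mul_add, mul_one, mul_div_assoc', mul_div_cancel_left₀ (η * L) hθ0.ne']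
  set D : ℕ → EuclideanSpace ℝ (Fin d2) := fun t =>
    (y x1 t - y x1 (t-1)) - (y x2 t - y x2 (t-1)) with hDdef
  set a : ℕ → ℝ := fun t => ‖y x1 t - y x2 t‖ with hadef
  set c : ℕ → ℝ := fun t => ‖D t‖ with hcdef
  have ha0 : a 0 = 0 := by simp [hadef, hy0]
  have hc0 : c 0 = 0 := by simp [hcdef, hDdef]
  -- recursion for increment differences
  have hDrec : ∀ t, D (t+1) = (1-θ) • D t +
      η • (gradient (f (σ t) x1) (y x1 t + (1 - θ) • (y x1 t - y x1 (t - 1)))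
         - gradient (f (σ t) x2) (y x2 t + (1 - θ) • (y x2 t - y x2 (t - 1)))) := by
    intro t
    simp only [hDdef, Nat.add_sub_cancel]
    rw [hrec x1 t, hrec x2 t]
    module
  have hcrec : ∀ t, c (t+1) ≤ (1-θ)*(1+η*L)*(c t) + η*L*Δ + η*L*(a t) := by
    intro t
    have hg := hgrad (σ t) x1 (y x1 t + (1 - θ) • (y x1 t - y x1 (t - 1)))
      x2 (y x2 t + (1 - θ) • (y x2 t - y x2 (t - 1)))
    have htil : ‖(y x1 t + (1 - θ) • (y x1 t - y x1 (t - 1))) -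
        (y x2 t + (1 - θ) • (y x2 t - y x2 (t - 1)))‖ ≤ a t + (1-θ) * c t := by
      have heq : (y x1 t + (1 - θ) • (y x1 t - y x1 (t - 1))) -
          (y x2 t + (1 - θ) • (y x2 t - y x2 (t - 1)))
          = (y x1 t - y x2 t) + (1-θ) • D t := by
        simp only [hDdef]; module
      rw [heq]
      calc ‖(y x1 t - y x2 t) + (1-θ) • D t‖
          ≤ ‖y x1 t - y x2 t‖ + ‖(1-θ) • D t‖ := norm_add_le _ _
        _ = a t + (1-θ) * c t := by
            rw [norm_smul, Real.norm_eq_abs, abs_of_nonneg hθ']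
      -- done
    have hnorm : c (t+1) ≤ (1-θ) * c t +
        η * ‖gradient (f (σ t) x1) (y x1 t + (1 - θ) • (y x1 t - y x1 (t - 1)))
         - gradient (f (σ t) x2) (y x2 t + (1 - θ) • (y x2 t - y x2 (t - 1)))‖ := by
      simp only [hcdef]
      rw [hDrec t]
      calc ‖(1-θ) • D t + η • _‖ ≤ ‖(1-θ) • D t‖ + ‖η • _‖ := norm_add_le _ _
        _ = (1-θ) * ‖D t‖ + η * ‖_‖ := by
            rw [norm_smul, norm_smul, Real.norm_eq_abs, Real.norm_eq_abs,
              abs_of_nonneg hθ', abs_of_nonneg hη]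
    have hgb : ‖gradient (f (σ t) x1) (y x1 t + (1 - θ) • (y x1 t - y x1 (t - 1)))
         - gradient (f (σ t) x2) (y x2 t + (1 - θ) • (y x2 t - y x2 (t - 1)))‖
        ≤ L * (Δ + (a t + (1-θ)*c t)) := by
      refine hg.trans ?_
      have := htil
      nlinarith
    nlinarith [mul_le_mul_of_nonneg_left hgb hη]
  -- a (t+1) ≤ a t + c (t+1)
  have harec : ∀ t, a (t+1) ≤ a t + c (t+1) := by
    intro t
    have heq : y x1 (t+1) - y x2 (t+1) = (y x1 t - y x2 t) + D (t+1) := by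
      simp only [hDdef, Nat.add_sub_cancel]; abel
    simp only [hadef, hcdef]
    rw [heq]
    exact norm_add_le _ _
  have hrho : 0 ≤ ρ - (1 + η*L) := by
    have h1 : η*L ≤ η*L/θ := by
      rw [le_div_iff₀ hθ0]; nlinarith [mul_nonneg hηL hθ']
    simp only [hρdef]; linarith
  have key : ∀ t, c t ≤ ρ^t * Δ ∧ η*L*(a t) ≤ θ*(ρ^(t+1) - ρ)*Δ ∧ a t ≤ t * ρ^t * Δ := by
    intro t
    induction t with
    | zero =>
      refine ⟨by simp [hc0, hΔ0], by simp [ha0], by simp [ha0]⟩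
    | succ t ih =>
      obtain ⟨h1, h2, h3⟩ := ih
      have hpt : (0:ℝ) ≤ ρ^t := pow_nonneg hρ0 t
      have hpt1 : (1:ℝ) ≤ ρ^t := one_le_pow₀ hρ1
      have hrub : 0 ≤ (1-θ) * ρ^t * (ρ - (1+η*L)) :=
        mul_nonneg (mul_nonneg hθ' hpt) hrho
      have hct1 : c (t+1) ≤ ρ^(t+1) * Δ := by
        have h := hcrec t
        have e1 : (1-θ)*(1+η*L)*(c t) ≤ (1-θ)*(1+η*L)*(ρ^t*Δ) :=
          mul_le_mul_of_nonneg_left h1 (mul_nonneg hθ' (by linarith))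
        rw [pow_succ]
        rw [pow_succ] at h2
        nlinarith [mul_nonneg hrub hΔ0, mul_nonneg hθ0.le hΔ0]
      refine ⟨hct1, ?_, ?_⟩
      · have h := harec t
        have e1 := mul_le_mul_of_nonneg_left h hηL
        have e2 : η*L*(c (t+1)) ≤ η*L*(ρ^(t+1)*Δ) :=
          mul_le_mul_of_nonneg_left hct1 hηL
        have hid : θ*(ρ^(t+1) - ρ)*Δ + η*L*(ρ^(t+1)*Δ) = θ*(ρ^(t+1+1) - ρ)*Δ := by
          rw [pow_succ ρ (t+1)]
          linear_combination (-(ρ^(t+1)*Δ)) * hθρ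
        linarith [e1, e2, h2, hid]
      · have h := harec t
        have hmono : ρ^t ≤ ρ^(t+1) := by
          rw [pow_succ]; exact le_mul_of_one_le_right hpt hρ1
        have e3 : (t:ℝ) * ρ^t * Δ ≤ (t:ℝ) * ρ^(t+1) * Δ :=
          mul_le_mul_of_nonneg_right
            (mul_le_mul_of_nonneg_left hmono (Nat.cast_nonneg t)) hΔ0
        push_cast
        linarith [h, h3, e3, hct1]
  have := (key T).2.2
  simpa [hadef, hρdef, hΔdef] using this
end
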